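/- Let T > 0 and let H : ℝ → M_n(ℂ) be a continuous, T-periodic, Hermitian-matrix-valued function. Let U : ℝ → M_n(ℂ) be the solution of i·U'(t) = H(t)·U(t) with U(0) = I. Then every U(t) is unitary, and there exist a Hermitian matrix H_F and a T-periodic map P : ℝ → M_n(ℂ) taking unitary values with P(0) = I, such that U(t) = P(t) · exp(−i·H_F·t) for all t ∈ ℝ (Floquet decomposition). -/

import Mathlib

open scoped Matrix.Norms.L2Operator

lemma exists_selfadj_log {n : ℕ} (W : Matrix (Fin n) (Fin n) ℂ)
    (hW : W ∈ Matrix.unitaryGroup (Fin n) ℂ) :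
    ∃ A : Matrix (Fin n) (Fin n) ℂ, IsSelfAdjoint A ∧
      NormedSpace.exp (Complex.I • A) = W := by
  letI : CStarAlgebra (Matrix (Fin n) (Fin n) ℂ) := Matrix.instCStarAlgebra
  have hnorm : IsStarNormal W :=
    ⟨by rw [Commute, SemiconjBy, Matrix.mem_unitaryGroup_iff'.mp hW,
        Matrix.mem_unitaryGroup_iff.mp hW]⟩
  have hsp : spectrum ℂ W ⊆ Metric.sphere 0 1 :=
    spectrum.subset_circle_of_unitary hW
  have hfin : ((Complex.arg '' (spectrum ℂ W))).Finite :=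
    (Matrix.finite_spectrum W).image _
  have hIoo : (Set.Ioo (-Real.pi) Real.pi).Infinite :=
    Set.Ioo_infinite (by linarith [Real.pi_pos])
  obtain ⟨a, haIoo, hanotin⟩ := (hIoo.diff hfin).nonempty
  set d : ℂ := Complex.exp (a * Complex.I) with hd_def
  have hdnotin : d ∉ spectrum ℂ W := by
    intro hd
    refine hanotin ⟨d, hd, ?_⟩
    rw [hd_def, Complex.exp_mul_I]
    exact Complex.arg_cos_add_sin_mul_I ⟨haIoo.1, le_of_lt haIoo.2⟩
  set c : ℂ := -d with hc_def
  have habs_d : ‖d‖ = 1 := Complex.norm_exp_ofReal_mul_I a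
  have habs_c : ‖c‖ = 1 := by rw [hc_def, norm_neg]; exact habs_d
  have hc0 : c ≠ 0 := by
    intro h; rw [h] at habs_c; simp at habs_c
  set f : ℂ → ℂ := fun w => ((Complex.arg (w / c) + Complex.arg c : ℝ) : ℂ) with hf_def
  have habs_w : ∀ w ∈ spectrum ℂ W, ‖w‖ = 1 := by
    intro w hw
    simpa using mem_sphere_zero_iff_norm.mp (hsp hw)
  have hslit : ∀ w ∈ spectrum ℂ W, w / c ∈ Complex.slitPlane := by
    intro w hw
    by_contra hns
    rw [Complex.mem_slitPlane_iff] at hns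
    push_neg at hns
    obtain ⟨hre, him⟩ := hns
    have habs_z : ‖w / c‖ = 1 := by
      rw [norm_div, habs_w w hw, habs_c, div_one]
    have hz : (w / c) = ((w / c).re : ℂ) := by
      apply Complex.ext <;> simp [him]
    rw [hz, Complex.norm_real, Real.norm_eq_abs] at habs_z
    have hre1 : (w / c).re = -1 := by
      rcases (abs_eq (by norm_num : (0:ℝ) ≤ 1)).mp habs_z with h | h
      · linarith
      · exact h
    have hw_eq : w = -c := by
      have h2 : w / c = -1 := by rw [hz, hre1]; norm_num
      rw [div_eq_iff hc0] at h2
      rw [h2]; ring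
    have : w = d := by rw [hw_eq, hc_def, neg_neg]
    exact hdnotin (this ▸ hw)
  have hf_cont : ContinuousOn f (spectrum ℂ W) := by
    intro w hw
    apply ContinuousAt.continuousWithinAt
    have hdivc : ContinuousAt (fun w : ℂ => w / c) w := continuousAt_id.div_const c
    have h1 : ContinuousAt (fun w : ℂ => Complex.arg (w / c)) w :=
      ContinuousAt.comp (x := w) (f := fun w : ℂ => w / c)
        (Complex.continuousAt_arg (hslit w hw)) hdivc
    exact (Complex.continuous_ofReal.continuousAt).comp (h1.add continuousAt_const)
  have hkey : ∀ w ∈ spectrum ℂ W, Complex.exp (Complex.I * f w) = w := by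
    intro w hw
    have h1 : Complex.exp (Complex.arg (w / c) * Complex.I) = w / c := by
      have := Complex.norm_mul_exp_arg_mul_I (w / c)
      rwa [norm_div, habs_w w hw, habs_c, div_one, Complex.ofReal_one, one_mul] at this
    have h2 : Complex.exp (Complex.arg c * Complex.I) = c := by
      have := Complex.norm_mul_exp_arg_mul_I c
      rwa [habs_c, Complex.ofReal_one, one_mul] at this
    rw [hf_def]
    push_cast
    rw [mul_add, mul_comm Complex.I, mul_comm Complex.I, Complex.exp_add, h1, h2,
      div_mul_cancel₀ _ hc0]
  refine ⟨cfc f W, ?_, ?_⟩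
  · rw [IsSelfAdjoint, ← cfc_star]
    congr 1
    funext w
    simp [hf_def, Complex.conj_ofReal]
  · have hsm : Complex.I • cfc f W = cfc (fun w => Complex.I * f w) W :=
      (cfc_const_mul Complex.I f W hf_cont).symm
    rw [hsm]
    have hg_cont : ContinuousOn (fun w => Complex.I * f w) (spectrum ℂ W) :=
      hf_cont.const_smul Complex.I
    rw [← CFC.complex_exp_eq_normedSpace_exp (cfc_predicate _ W),
      ← cfc_comp' Complex.exp (fun w => Complex.I * f w) W
        Complex.continuous_exp.continuousOn hg_cont]
    calc cfc (Complex.exp ∘ fun w => Complex.I * f w) W = cfc (id : ℂ → ℂ) W :=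
          cfc_congr (fun w hw => hkey w hw)
    _ = W := cfc_id ℂ W

/-- Floquet decomposition: let `T > 0` and `H : ℝ → Mₙ(ℂ)` be continuous,
`T`-periodic, Hermitian-valued, and let `U` solve `i U'(t) = H(t) U(t)`, `U(0) = I`
(i.e. `U'(t) = −i H(t) U(t)`). Then every `U(t)` is unitary, and there are a Hermitian
matrix `H_F` and a `T`-periodic unitary-valued `P` with `P(0) = I` such that
`U(t) = P(t) exp(−i H_F t)` for all `t`. -/
theorem floquet_decomposition {n : ℕ} (T : ℝ) (hT : 0 < T)
    (H : ℝ → Matrix (Fin n) (Fin n) ℂ) (hHcont : Continuous H)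
    (hHper : ∀ t, H (t + T) = H t) (hHherm : ∀ t, (H t).IsHermitian)
    (U : ℝ → Matrix (Fin n) (Fin n) ℂ) (hU0 : U 0 = 1)
    (hU : ∀ t, HasDerivAt U (-Complex.I • (H t * U t)) t) :
    (∀ t, U t ∈ Matrix.unitaryGroup (Fin n) ℂ) ∧
    ∃ (HF : Matrix (Fin n) (Fin n) ℂ) (P : ℝ → Matrix (Fin n) (Fin n) ℂ),
      HF.IsHermitian ∧ (∀ t, P (t + T) = P t) ∧ P 0 = 1 ∧
      (∀ t, P t ∈ Matrix.unitaryGroup (Fin n) ℂ) ∧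
      ∀ t : ℝ, U t = P t * NormedSpace.exp ((-Complex.I * (t : ℂ)) • HF) := by
  have hstarU : ∀ t, HasDerivAt (fun s => star (U s)) (Complex.I • (star (U t) * H t)) t := by
    intro t
    have h2 := (hU t).star
    refine h2.congr_deriv ?_
    rw [star_smul, star_mul]
    simp [Matrix.star_eq_conjTranspose, (hHherm t).eq]
  have hcancel : ∀ A B C : Matrix (Fin n) (Fin n) ℂ,
      (0 : Matrix (Fin n) (Fin n) ℂ) = (Complex.I • (A * B)) * C + A * (-Complex.I • (B * C)) := by
    intro A B C
    rw [smul_mul_assoc, mul_smul_comm, mul_assoc, neg_smul, add_neg_cancel]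
  have hconst : ∀ f : ℝ → Matrix (Fin n) (Fin n) ℂ, (∀ t, HasDerivAt f 0 t) → ∀ t, f t = f 0 :=
    fun f hf t => is_const_of_deriv_eq_zero (fun x => (hf x).differentiableAt)
      (fun x => (hf x).deriv) t 0
  have hstar_mul : ∀ t, star (U t) * U t = 1 := by
    intro t
    have h0 : ∀ s, HasDerivAt (fun r => star (U r) * U r) 0 s := by
      intro s
      have := (hstarU s).mul (hU s)
      refine this.congr_deriv ?_
      exact (hcancel _ _ _).symm
    have := hconst _ h0 t
    rw [this, hU0]; simp
  have hUmem : ∀ t, U t ∈ Matrix.unitaryGroup (Fin n) ℂ :=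
    fun t => Matrix.mem_unitaryGroup_iff'.mpr (hstar_mul t)
  have hmul_star : ∀ t, U t * star (U t) = 1 :=
    fun t => Matrix.mem_unitaryGroup_iff.mp (hUmem t)
  have hshift : ∀ t, HasDerivAt (fun s => U (s + T)) (-Complex.I • (H t * U (t + T))) t := by
    intro t
    have h1 : HasDerivAt (fun s : ℝ => s + T) 1 t := (hasDerivAt_id t).add_const T
    have h2 := HasDerivAt.scomp t (hU (t + T)) h1
    rw [hHper] at h2
    simp at h2
    exact h2.congr_deriv (neg_smul _ _).symm
  have hDconst : ∀ t, star (U t) * U (t + T) = U T := by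
    have h0 : ∀ s, HasDerivAt (fun r => star (U r) * U (r + T)) 0 s := by
      intro s
      have := (hstarU s).mul (hshift s)
      refine this.congr_deriv ?_
      exact (hcancel _ _ _).symm
    intro t
    have := hconst _ h0 t
    rw [this, hU0]
    simp
  have hper : ∀ t, U (t + T) = U t * U T := by
    intro t
    calc U (t + T) = (U t * star (U t)) * U (t + T) := by rw [hmul_star t, one_mul]
    _ = U t * (star (U t) * U (t + T)) := by rw [mul_assoc]
    _ = U t * U T := by rw [hDconst t]
  refine ⟨hUmem, ?_⟩
  obtain ⟨A, hA, hexpA⟩ := exists_selfadj_log (U T) (hUmem T)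
  set HF : Matrix (Fin n) (Fin n) ℂ := ((-(T⁻¹) : ℝ) : ℂ) • A with hHF_def
  set E : ℝ → Matrix (Fin n) (Fin n) ℂ :=
    fun s => NormedSpace.exp ((-Complex.I * (s : ℂ)) • HF) with hE_def
  have hHFherm : HF.IsHermitian := by
    rw [Matrix.IsHermitian, hHF_def, Matrix.conjTranspose_smul,
      ← Matrix.star_eq_conjTranspose, hA.star_eq]
    congr 1
    simp [Complex.star_def, Complex.conj_ofReal]
  have hEadd : ∀ s t : ℝ, E (s + t) = E s * E t := by
    intro s t
    have hcomm : Commute ((-Complex.I * (s : ℂ)) • HF) ((-Complex.I * (t : ℂ)) • HF) :=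
      ((Commute.refl HF).smul_left _).smul_right _
    have harg : (-Complex.I * ((s + t : ℝ) : ℂ)) • HF
        = (-Complex.I * (s : ℂ)) • HF + (-Complex.I * (t : ℂ)) • HF := by
      rw [← add_smul]
      congr 1
      push_cast
      ring
    rw [hE_def]
    simp only []
    rw [harg, NormedSpace.exp_add_of_commute_of_mem_ball (𝕂 := ℂ) hcomm (by simp [NormedSpace.expSeries_radius_eq_top]) (by simp [NormedSpace.expSeries_radius_eq_top])]
  have hE0 : E 0 = 1 := by
    rw [hE_def]
    simp [NormedSpace.exp_zero]
  have hEstar : ∀ s : ℝ, star (E s) = E (-s) := by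
    intro s
    have h1 : star ((-Complex.I * (s : ℂ)) • HF) = (-Complex.I * ((-s : ℝ) : ℂ)) • HF := by
      rw [star_smul, Matrix.star_eq_conjTranspose, hHFherm.eq]
      congr 1
      simp [Complex.star_def]
    rw [hE_def]
    simp only []
    rw [NormedSpace.star_exp, h1]
  have hT0 : (T : ℂ) ≠ 0 := by exact_mod_cast hT.ne'
  have hET : E T = U T := by
    rw [hE_def]
    simp only []
    have harg : (-Complex.I * (T : ℂ)) • HF = Complex.I • A := by
      rw [hHF_def, smul_smul]
      congr 1
      push_cast
      field_simp
    rw [harg, hexpA]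
  refine ⟨HF, fun t => U t * E (-t), hHFherm, ?_, ?_, ?_, ?_⟩
  · intro t
    show U (t + T) * E (-(t + T)) = U t * E (-t)
    have h1 : E (-(t + T)) = E (-T) * E (-t) := by
      rw [← hEadd]
      congr 1
      ring
    have h2 : U T * E (-T) = 1 := by
      rw [← hET, ← hEadd]
      simp [hE0]
    rw [hper t, h1, mul_assoc, ← mul_assoc (U T), h2, one_mul]
  · show U 0 * E (-0) = 1
    rw [neg_zero, hU0, hE0, one_mul]
  · intro t
    show U t * E (-t) ∈ _
    apply Matrix.mem_unitaryGroup_iff'.mpr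
    rw [star_mul, mul_assoc, ← mul_assoc (star (U t)), hstar_mul t, one_mul,
      hEstar, neg_neg, ← hEadd]
    simp [hE0]
  · intro t
    show U t = U t * E (-t) * NormedSpace.exp ((-Complex.I * (t : ℂ)) • HF)
    have hre : NormedSpace.exp ((-Complex.I * (t : ℂ)) • HF) = E t := rfl
    rw [hre, mul_assoc, ← hEadd]
    simp [hE0]
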